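/- Rightmost-occurrence lemma (key structural lemma): if v is a normal form (no reduction applies), x_o is a variable with x_o : oR ⊢ v : oR in the linear refinement type system, and [U/x_o]v reduces to some tree π, then v has the shape π₁ * (π₂ * ⋯ (π_n * x_o)⋯) for some n ≥ 0 and trees π₁,…,π_n, where * denotes the binary terminal br. -/

import Mathlib

/-- Sorts (simple types): κ ::= o | κ₁ → κ₂. -/
inductive STy where
  | o : STy
  | arr : STy → STy → STy
deriving DecidableEq

/-- ord(o)=0, ord(κ₁→κ₂)=max(ord κ₁ + 1, ord κ₂). -/
def STy.ord : STy → Nat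
  | .o => 0
  | .arr a b => max (a.ord + 1) b.ord

/-- The list of argument sorts of a sort. -/
def STy.args : STy → List STy
  | .o => []
  | .arr a b => a :: b.args

/-- The sort o → ⋯ → o → o with n arguments (sort of an arity-n terminal). -/
def tyOfArity : Nat → STy
  | 0 => .o
  | n + 1 => .arr .o (tyOfArity n)

/-- Applicative terms over non-terminals `N` and terminals `T`,
    with variables named by natural numbers. -/
inductive Tm (N T : Type) where
  | var : Nat → Tm N T
  | nt : N → Tm N T
  | tm : T → Tm N T
  | app : Tm N T → Tm N T → Tm N T
deriving DecidableEq

/-- Simultaneous substitution of the terms `ts` for the variables 0,…,k−1. -/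
def substL {N T : Type} (ts : List (Tm N T)) : Tm N T → Tm N T
  | .var n => ts.getD n (.var n)
  | .nt A => .nt A
  | .tm a => .tm a
  | .app s t => .app (substL ts s) (substL ts t)

/-- Simple typing of applicative terms: terminals of arity k have sort o^k → o. -/
inductive HasTy {N T : Type} (ar : T → Nat) (nty : N → STy) :
    List STy → Tm N T → STy → Prop where
  | var {Γ n κ} : Γ[n]? = some κ → HasTy ar nty Γ (.var n) κ
  | nt {Γ A} : HasTy ar nty Γ (.nt A) (nty A)
  | tm {Γ a} : HasTy ar nty Γ (.tm a) (tyOfArity (ar a))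
  | app {Γ s t κ₁ κ₂} : HasTy ar nty Γ s (.arr κ₁ κ₂) → HasTy ar nty Γ t κ₁ →
      HasTy ar nty Γ (.app s t) κ₂

/-- A higher-order grammar over terminals `T` with arities `ar`: finitely many
    sorted non-terminals, a base-sort start symbol, and for each non-terminal a
    finite set of rule bodies `t` (the rule being A x₁ ⋯ x_k → t), each
    well-typed of base sort under the parameter sorts of A. -/
structure Grammar (T : Type) (ar : T → Nat) where
  N : Type
  nFin : Finite N
  nty : N → STy
  start : N
  startO : nty start = .o
  rules : N → List (Tm N T)
  rulesTy : ∀ A t, t ∈ rules A → HasTy ar nty (nty A).args t .o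

/-- Iterated application to a list of arguments. -/
def appList {N T : Type} : Tm N T → List (Tm N T) → Tm N T
  | s, [] => s
  | s, t :: ts => appList (.app s t) ts

/-- One-step rewriting: a fully applied non-terminal is rewritten by one of its
    rules, and reduction is allowed in the arguments of a terminal. -/
inductive Red {T : Type} {ar : T → Nat} (G : Grammar T ar) :
    Tm G.N T → Tm G.N T → Prop where
  | step {A body ts} : body ∈ G.rules A → ts.length = (G.nty A).args.length →
      Red G (appList (.nt A) ts) (substL ts body)
  | ctx {a t t' ts₁ ts₂} : Red G t t' → ts₁.length + 1 + ts₂.length = ar a →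
      Red G (appList (.tm a) (ts₁ ++ t :: ts₂)) (appList (.tm a) (ts₁ ++ t' :: ts₂))

/-- Many-step reduction. -/
def RedStar {T : Type} {ar : T → Nat} (G : Grammar T ar) :
    Tm G.N T → Tm G.N T → Prop :=
  Relation.ReflTransGen (Red G)

/-- The grammar has order at most n. -/
def Grammar.orderLE {T : Type} {ar : T → Nat} (G : Grammar T ar) (n : Nat) : Prop :=
  ∀ A, (G.nty A).ord ≤ n

/-- Terminal alphabet of word grammars: `some a` has arity 1, `none` is the
    end-of-word symbol e of arity 0. -/
def wordAr {β : Type} : Option β → Nat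
  | none => 0
  | some _ => 1

/-- The term a₁(⋯(a_n e)⋯) representing the word a₁⋯a_n. -/
def wordTm {N β : Type} : List β → Tm N (Option β)
  | [] => .tm none
  | a :: w => .app (.tm (some a)) (wordTm w)

/-- The word language of a word grammar. -/
def WordLang {β : Type} (G : Grammar (Option β) wordAr) : Set (List β) :=
  { w | RedStar G (.nt G.start) (wordTm w) }

/-- Terminal alphabet of tree grammars: a binary `br`, a nullary `e`, and
    nullary letters from β. -/
inductive TSym (β : Type) where
  | br : TSym β
  | e : TSym β
  | ltr : β → TSym β
deriving DecidableEq

def treeAr {β : Type} : TSym β → Nat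
  | .br => 2
  | .e => 0
  | .ltr _ => 0

/-- Trees over the alphabet {br, e} ∪ β. -/
inductive BT (β : Type) where
  | e : BT β
  | ltr : β → BT β
  | br : BT β → BT β → BT β
deriving DecidableEq

/-- A tree as an applicative term. -/
def BT.toTm {N β : Type} : BT β → Tm N (TSym β)
  | .e => .tm .e
  | .ltr a => .tm (.ltr a)
  | .br l r => .app (.app (.tm .br) l.toTm) r.toTm

/-- The frontier word of a tree; `none` stands for the leaf symbol e. -/
def BT.leaves {β : Type} : BT β → List (Option β)
  | .e => [none]
  | .ltr a => [some a]
  | .br l r => l.leaves ++ r.leaves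

/-- The frontier language of a tree grammar. -/
def LeafLang {β : Type} (G : Grammar (TSym β) treeAr) : Set (List (Option β)) :=
  { w | ∃ π : BT β, RedStar G (.nt G.start) π.toTm ∧ π.leaves = w }

/-- The ε-adjusted frontier language: the single-leaf word "e" counts as ε. -/
def LeafLangE {β : Type} (G : Grammar (TSym β) treeAr) : Set (List (Option β)) :=
  { w | w ∈ LeafLang G ∧ w ≠ [none] } ∪ { w | w = [] ∧ [none] ∈ LeafLang G }

/-- Extended terms u ::= x | A | a | u U | λx.u, where an argument
    U = {u₁,…,u_k} (k ≥ 1) is a non-empty set of terms representing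
    non-deterministic choice (represented as a list). -/
inductive ETm (V N T : Type) where
  | var : V → ETm V N T
  | nt : N → ETm V N T
  | tm : T → ETm V N T
  | app : ETm V N T → List (ETm V N T) → ETm V N T
  | lam : V → ETm V N T → ETm V N T

/-- Iterated application of a head to a list of argument sets. -/
def appLE {V N T : Type} : ETm V N T → List (List (ETm V N T)) → ETm V N T
  | u, [] => u
  | u, U :: Us => appLE (.app u U) Us

/-- The set-valued substitution [σ]u of term-sets for variables in an
    extended term. -/
def dsub {V N T : Type} [DecidableEq V]
    (σ : V → Option (List (ETm V N T))) : ETm V N T → List (ETm V N T)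
  | .var x => (σ x).getD [.var x]
  | .nt A => [.nt A]
  | .tm a => [.tm a]
  | .app u U =>
      (dsub σ u).map (fun v => .app v (U.attach.flatMap (fun w => dsub σ w.1)))
  | .lam x u =>
      (dsub (fun y => if y = x then none else σ y) u).map (.lam x)
termination_by u => sizeOf u
decreasing_by
  all_goals simp_wf
  all_goals first
    | omega
    | (have := List.sizeOf_lt_of_mem w.2; omega)

/-- v ∈ [σ]u : v is one of the results of the set-valued substitution. -/
def DSub {V N T : Type} [DecidableEq V]
    (σ : V → Option (List (ETm V N T))) (u v : ETm V N T) : Prop :=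
  v ∈ dsub σ u

/-- An extended higher-order grammar: rules A x₁ ⋯ x_k → u. -/
structure EGrammar (V N T : Type) (ar : T → Nat) where
  start : N
  rules : N → List V → ETm V N T → Prop

/-- The substitution sending the parameters xs to the argument sets Us. -/
def sigmaOf {V N T : Type} [DecidableEq V] (xs : List V)
    (Us : List (List (ETm V N T))) : V → Option (List (ETm V N T)) :=
  fun x => ((xs.zip Us).find? (fun p => p.1 = x)).map Prod.snd

/-- One-step reduction of extended terms: a fully applied non-terminal is
    rewritten (lazily, via the set-valued substitution); under a terminal,
    either a singleton argument is reduced, or a non-singleton argument set is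
    collapsed to one of its members. -/
inductive ERed {V N T : Type} [DecidableEq V] {ar : T → Nat}
    (G : EGrammar V N T ar) : ETm V N T → ETm V N T → Prop where
  | step {A xs body Us u'} : G.rules A xs body → Us.length = xs.length →
      DSub (sigmaOf xs Us) body u' →
      ERed G (appLE (.nt A) Us) u'
  | ctx {a u u' Us₁ Us₂} : ERed G u u' →
      Us₁.length + 1 + Us₂.length = ar a →
      ERed G (appLE (.tm a) (Us₁ ++ [u] :: Us₂))
             (appLE (.tm a) (Us₁ ++ [u'] :: Us₂))
  | collapse {a u U Us₁ Us₂} : u ∈ U → U.length ≠ 1 →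
      Us₁.length + 1 + Us₂.length = ar a →
      ERed G (appLE (.tm a) (Us₁ ++ U :: Us₂))
             (appLE (.tm a) (Us₁ ++ [u] :: Us₂))

/-- Many-step reduction of extended terms. -/
def ERedStar {V N T : Type} [DecidableEq V] {ar : T → Nat}
    (G : EGrammar V N T ar) : ETm V N T → ETm V N T → Prop :=
  Relation.ReflTransGen (ERed G)

/-- Types of the linear refinement type system: ρ ::= o | oR | ρ → ρ'. -/
inductive Ty2 where
  | o : Ty2
  | oR : Ty2
  | arr : Ty2 → Ty2 → Ty2
deriving DecidableEq

mutual
  /-- Balanced types: o is balanced; ρ → ρ' is balanced if both are balanced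
      or both are unbalanced. -/
  inductive Bal : Ty2 → Prop where
    | o : Bal .o
    | bb {a b} : Bal a → Bal b → Bal (.arr a b)
    | uu {a b} : Unbal a → Unbal b → Bal (.arr a b)

  /-- Unbalanced (linear) types: oR is unbalanced; ρ → ρ' is unbalanced if
      ρ is balanced and ρ' unbalanced. -/
  inductive Unbal : Ty2 → Prop where
    | oR : Unbal .oR
    | bu {a b} : Bal a → Unbal b → Unbal (.arr a b)
end

/-- A well-formed type is balanced or unbalanced. -/
def Ty2.WF (ρ : Ty2) : Prop := Bal ρ ∨ Unbal ρ

/-- The balanced "forgetful" translation, mapping oR to o. -/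
def forget : Ty2 → Ty2
  | .o => .o
  | .oR => .o
  | .arr a b => .arr (forget a) (forget b)

/-- All bindings of the environment are balanced. -/
def BalEnv (Φ : Finset (Nat × Ty2)) : Prop := ∀ p ∈ Φ, Bal p.2

/-- The linear refinement type system for terms of the transformed grammar:
    base types o (balanced) and oR (unbalanced/linear); br has the types
    o → o → o and o → oR → oR; e has the types o and oR; source letters have
    type o; each non-terminal A may be used at its unbalanced type ntyR A or
    at the corresponding balanced type forget (ntyR A); variables and constants
    require the remaining environment to be balanced; application splits the
    environment, the union being allowed only if shared bindings are balanced;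
    argument sets share the environment; abstraction extends the environment. -/
inductive RTy {N β : Type} (ntyR : N → Ty2) :
    Finset (Nat × Ty2) → ETm Nat N (TSym β) → Ty2 → Prop where
  | var {Φ x ρ} : (x, ρ) ∈ Φ → (∀ p ∈ Φ.erase (x, ρ), Bal p.2) →
      RTy ntyR Φ (.var x) ρ
  | ltr {Φ a} : BalEnv Φ → RTy ntyR Φ (.tm (.ltr a)) .o
  | brO {Φ} : BalEnv Φ → RTy ntyR Φ (.tm .br) (.arr .o (.arr .o .o))
  | brR {Φ} : BalEnv Φ → RTy ntyR Φ (.tm .br) (.arr .o (.arr .oR .oR))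
  | epsO {Φ} : BalEnv Φ → RTy ntyR Φ (.tm .e) .o
  | epsR {Φ} : BalEnv Φ → RTy ntyR Φ (.tm .e) .oR
  | ntR {Φ A} : BalEnv Φ → RTy ntyR Φ (.nt A) (ntyR A)
  | ntO {Φ A} : BalEnv Φ → RTy ntyR Φ (.nt A) (forget (ntyR A))
  | app {Φ₀ Φ₁ u U ρ₁ ρ} : RTy ntyR Φ₀ u (.arr ρ₁ ρ) → U ≠ [] →
      (∀ v ∈ U, RTy ntyR Φ₁ v ρ₁) →
      (∀ p ∈ Φ₀ ∩ Φ₁, Bal p.2) →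
      RTy ntyR (Φ₀ ∪ Φ₁) (.app u U) ρ
  | abs {Φ x u ρ' ρ} : RTy ntyR (insert (x, ρ') Φ) u ρ →
      (∀ ρ'', (x, ρ'') ∉ Φ) →
      RTy ntyR Φ (.lam x u) (.arr ρ' ρ)

/-- A tree as an extended term. -/
def BT.toETm {V N β : Type} : BT β → ETm V N (TSym β)
  | .e => .tm .e
  | .ltr a => .tm (.ltr a)
  | .br l r => .app (.app (.tm .br) [l.toETm]) [r.toETm]

/-- v has the shape π₁ * (π₂ * ⋯ (π_n * x)⋯) (n ≥ 0) for trees π₁,…,π_n,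
    where * is the binary terminal br. -/
inductive RightSpine {N β : Type} (x : Nat) : ETm Nat N (TSym β) → Prop where
  | base : RightSpine x (.var x)
  | cons {v : ETm Nat N (TSym β)} (π : BT β) : RightSpine x v →
      RightSpine x (.app (.app (.tm .br) [BT.toETm π]) [v])


section Stmt7Aux

open Relation

variable {V N T : Type} {β : Type} {NN : Type}

/-- Head of an applicative extended term. -/
def headOf : ETm V N T → ETm V N T
  | .app u _ => headOf u
  | u => u

/-- Argument sets along the application spine. -/
def spineArgs : ETm V N T → List (List (ETm V N T))
  | .app u U => spineArgs u ++ [U]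
  | _ => []

@[simp] lemma headOf_app (u : ETm V N T) (U) : headOf (.app u U) = headOf u := rfl
@[simp] lemma headOf_var (y : V) : headOf (.var y : ETm V N T) = .var y := rfl
@[simp] lemma headOf_nt (A : N) : headOf (.nt A : ETm V N T) = .nt A := rfl
@[simp] lemma headOf_tm (a : T) : headOf (.tm a : ETm V N T) = .tm a := rfl
@[simp] lemma headOf_lam (y : V) (b : ETm V N T) : headOf (.lam y b) = .lam y b := rfl

@[simp] lemma spineArgs_app (u : ETm V N T) (U) : spineArgs (.app u U) = spineArgs u ++ [U] := rfl
@[simp] lemma spineArgs_var (y : V) : spineArgs (.var y : ETm V N T) = [] := rfl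
@[simp] lemma spineArgs_nt (A : N) : spineArgs (.nt A : ETm V N T) = [] := rfl
@[simp] lemma spineArgs_tm (a : T) : spineArgs (.tm a : ETm V N T) = [] := rfl
@[simp] lemma spineArgs_lam (y : V) (b : ETm V N T) : spineArgs (.lam y b) = [] := rfl

lemma headOf_appLE (u : ETm V N T) (Us) : headOf (appLE u Us) = headOf u := by
  induction Us generalizing u with
  | nil => rfl
  | cons U Us ih => simpa [appLE] using ih (.app u U)

lemma spineArgs_appLE (u : ETm V N T) (Us) : spineArgs (appLE u Us) = spineArgs u ++ Us := by
  induction Us generalizing u with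
  | nil => simp [appLE]
  | cons U Us ih => simp [appLE, ih (.app u U)]

lemma appLE_append (u : ETm V N T) (Us Vs) :
    appLE u (Us ++ Vs) = appLE (appLE u Us) Vs := by
  induction Us generalizing u with
  | nil => simp [appLE]
  | cons U Us ih => simp [appLE, ih (.app u U)]

theorem eta_spine : ∀ u : ETm V N T, appLE (headOf u) (spineArgs u) = u
  | .var _ => rfl
  | .nt _ => rfl
  | .tm _ => rfl
  | .lam _ _ => rfl
  | .app u U => by
      rw [headOf_app, spineArgs_app, appLE_append, eta_spine u]; rfl

lemma dsub_app_eq [DecidableEq V] (σ) (u : ETm V N T) (U) :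
    dsub σ (.app u U) = (dsub σ u).map (fun v => .app v (U.flatMap (dsub σ))) := by
  rw [dsub]
  congr 1
  funext v
  congr 1
  rw [← List.attach_map_subtype_val U, List.flatMap_map]
  simp [List.attach_map_subtype_val]

@[simp] lemma dsub_var [DecidableEq V] (σ) (y : V) :
    dsub σ (.var y : ETm V N T) = (σ y).getD [.var y] := by rw [dsub]

@[simp] lemma dsub_nt [DecidableEq V] (σ) (A : N) :
    dsub σ (.nt A : ETm V N T) = [.nt A] := by rw [dsub]

@[simp] lemma dsub_tm [DecidableEq V] (σ) (a : T) :
    dsub σ (.tm a : ETm V N T) = [.tm a] := by rw [dsub]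

@[simp] lemma dsub_lam [DecidableEq V] (σ) (y : V) (b : ETm V N T) :
    dsub σ (.lam y b) = (dsub (fun z => if z = y then none else σ z) b).map (.lam y) := by
  rw [dsub]

theorem dsub_ne [DecidableEq V] :
    ∀ (u : ETm V N T) (σ), (∀ y L, σ y = some L → L ≠ []) → dsub σ u ≠ []
  | .var y, σ, h => by
      rw [dsub_var]
      cases hy : σ y with
      | none => simp
      | some L => simpa using h y L hy
  | .nt _, σ, _ => by simp
  | .tm _, σ, _ => by simp
  | .app u U, σ, h => by
      rw [dsub_app_eq]
      simpa using dsub_ne u σ h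
  | .lam y b, σ, h => by
      rw [dsub_lam]
      simp only [ne_eq, List.map_eq_nil_iff]
      apply dsub_ne b
      intro z L hz
      by_cases hzy : z = y
      · simp [hzy] at hz
      · exact h z L (by simpa [hzy] using hz)

theorem dsub_headNt [DecidableEq V] :
    ∀ (u : ETm V N T) (σ) (w) (A), headOf u = .nt A → w ∈ dsub σ u →
      headOf w = .nt A ∧ (spineArgs w).length = (spineArgs u).length
  | .var y, _, _, _, h, _ => by simp at h
  | .tm _, _, _, _, h, _ => by simp at h
  | .lam _ _, _, _, _, h, _ => by simp at h
  | .nt B, σ, w, A, h, hw => by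
      rw [dsub_nt] at hw
      simp at hw h
      subst hw
      simp [h]
  | .app u U, σ, w, A, h, hw => by
      rw [dsub_app_eq] at hw
      obtain ⟨v, hv, rfl⟩ := List.mem_map.mp hw
      obtain ⟨h1, h2⟩ := dsub_headNt u σ v A (by simpa using h) hv
      simp [h1, h2]

theorem dsub_headLam [DecidableEq V] :
    ∀ (u : ETm V N T) (σ) (w), (∃ y b, headOf u = .lam y b) → w ∈ dsub σ u →
      ∃ y b, headOf w = .lam y b
  | .var y, _, _, h, _ => by simp at h
  | .tm _, _, _, h, _ => by simp at h
  | .nt _, _, _, h, _ => by simp at h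
  | .lam y b, σ, w, _, hw => by
      rw [dsub_lam] at hw
      obtain ⟨v, hv, rfl⟩ := List.mem_map.mp hw
      exact ⟨y, v, rfl⟩
  | .app u U, σ, w, h, hw => by
      rw [dsub_app_eq] at hw
      obtain ⟨v, hv, rfl⟩ := List.mem_map.mp hw
      obtain ⟨y, b, hyb⟩ := dsub_headLam u σ v (by simpa using h) hv
      exact ⟨y, b, by simpa using hyb⟩

lemma sigmaOf_mem [DecidableEq V] {xs : List V} {Us : List (List (ETm V N T))} {y L}
    (h : sigmaOf xs Us y = some L) : L ∈ Us := by
  unfold sigmaOf at h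
  obtain ⟨p, hp, rfl⟩ := Option.map_eq_some_iff.mp h
  exact (List.of_mem_zip (List.mem_of_find?_eq_some hp)).2

lemma rty_spine_ne {ntyR : NN → Ty2} {Φ} {u : ETm Nat NN (TSym β)} {ρ}
    (h : RTy ntyR Φ u ρ) : ∀ U ∈ spineArgs u, U ≠ [] := by
  induction h with
  | app h1 hne h2 hbal ih1 ih2 =>
      intro U hU
      rw [spineArgs_app] at hU
      rcases List.mem_append.mp hU with hU | hU
      · exact ih1 U hU
      · simp at hU; subst hU; assumption
  | var _ _ => simp
  | ltr _ => simp
  | brO _ => simp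
  | brR _ => simp
  | epsO _ => simp
  | epsR _ => simp
  | ntR _ => simp
  | ntO _ => simp
  | abs _ _ _ => simp

lemma headOf_toETm (π : BT β) :
    ∃ a, headOf (BT.toETm π : ETm V NN (TSym β)) = .tm a := by
  cases π with
  | e => exact ⟨.e, rfl⟩
  | ltr a => exact ⟨.ltr a, rfl⟩
  | br l r => exact ⟨.br, rfl⟩

lemma star_eq_of_irred {α : Type} {r : α → α → Prop} {a b : α}
    (h : Relation.ReflTransGen r a b) (hirr : ∀ c, ¬ r a c) : a = b := by
  rcases h.cases_head with h | ⟨c, hc, _⟩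
  · exact h
  · exact absurd hc (hirr c)

lemma not_red_of_headLam {G : EGrammar Nat NN (TSym β) treeAr} {w w' : ETm Nat NN (TSym β)}
    (h : ∃ y b, headOf w = .lam y b) : ¬ ERed G w w' := by
  intro hr
  cases hr with
  | step _ _ _ => rw [headOf_appLE] at h; simp at h
  | ctx _ _ => rw [headOf_appLE] at h; simp at h
  | collapse _ _ _ => rw [headOf_appLE] at h; simp at h

lemma no_tree_of_headLam {G : EGrammar Nat NN (TSym β) treeAr}
    {v w : ETm Nat NN (TSym β)} {σ} {π : BT β}
    (hh : ∃ y b, headOf v = .lam y b) (hw : w ∈ dsub σ v)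
    (hs : ERedStar G w π.toETm) : False := by
  have hwl := dsub_headLam v σ w hh hw
  have heq := star_eq_of_irred hs (fun c => not_red_of_headLam hwl)
  obtain ⟨a, ha⟩ := headOf_toETm (V := Nat) (NN := NN) π
  obtain ⟨y, b, hyb⟩ := hwl
  rw [heq, ha] at hyb
  cases hyb

lemma no_tree_of_headNt {G : EGrammar Nat NN (TSym β) treeAr}
    {v w : ETm Nat NN (TSym β)} {σ} {π : BT β} {A}
    (hh : headOf v = .nt A)
    (hne : ∀ U ∈ spineArgs v, U ≠ [])
    (hnf : ∀ u', ¬ ERed G v u')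
    (hw : w ∈ dsub σ v) (hs : ERedStar G w π.toETm) : False := by
  obtain ⟨hwh, hlen⟩ := dsub_headNt v σ w A hh hw
  have hirr : ∀ u', ¬ ERed G w u' := by
    intro u' hr
    cases hr with
    | @step A' xs body Us u'' hrule hlen' hd =>
        rw [headOf_appLE] at hwh
        rw [spineArgs_appLE] at hlen
        simp only [headOf_nt, ETm.nt.injEq] at hwh
        simp only [spineArgs_nt, List.nil_append] at hlen
        have hgood : ∀ y L, sigmaOf xs (spineArgs v) y = some L → L ≠ [] :=
          fun y L h => hne L (sigmaOf_mem h)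
        obtain ⟨u₀, hu₀⟩ := List.exists_mem_of_ne_nil _ (dsub_ne body (sigmaOf xs (spineArgs v)) hgood)
        refine hnf u₀ ?_
        rw [← eta_spine v, hh, ← hwh]
        exact ERed.step hrule (by omega) hu₀
    | ctx _ _ => rw [headOf_appLE] at hwh; simp at hwh
    | collapse _ _ _ => rw [headOf_appLE] at hwh; simp at hwh
  have heq := star_eq_of_irred hs hirr
  obtain ⟨a, ha⟩ := headOf_toETm (V := Nat) (NN := NN) π
  rw [heq, ha] at hwh
  cases hwh

lemma two_split {α : Type} {ts₁ ts₂ : List α} {t D₁ D₂ : α}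
    (h : ts₁ ++ t :: ts₂ = [D₁, D₂]) :
    (ts₁ = [] ∧ t = D₁ ∧ ts₂ = [D₂]) ∨ (ts₁ = [D₁] ∧ t = D₂ ∧ ts₂ = []) := by
  match ts₁, h with
  | [], h => simp at h; exact Or.inl ⟨rfl, h.1, h.2⟩
  | [a], h => simp at h; exact Or.inr ⟨by simp [h.1], h.2.1, h.2.2⟩
  | a :: b :: l, h =>
    exfalso
    have := congrArg List.length h
    simp at this

lemma red_br_decomp {G : EGrammar Nat NN (TSym β) treeAr} {π : BT β} {s : ETm Nat NN (TSym β)}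
    (hs : ERedStar G s π.toETm) :
    ∀ D₁ D₂, s = .app (.app (.tm .br) D₁) D₂ →
    ∃ πl πr, π = .br πl πr ∧ ∃ u₁ ∈ D₁, ∃ u₂ ∈ D₂,
      ERedStar G u₁ πl.toETm ∧ ERedStar G u₂ πr.toETm := by
  induction hs using Relation.ReflTransGen.head_induction_on with
  | refl =>
      intro D₁ D₂ h
      cases π with
      | e => simp [BT.toETm] at h
      | ltr a => simp [BT.toETm] at h
      | br l r =>
          simp only [BT.toETm, ETm.app.injEq] at h
          exact ⟨l, r, rfl, l.toETm, by rw [← h.1.2]; simp, r.toETm, by rw [← h.2]; simp,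
            Relation.ReflTransGen.refl, Relation.ReflTransGen.refl⟩
  | head hred hstar ih =>
      intro D₁ D₂ hshape
      cases hred with
      | step hrule hlen hd =>
          exfalso
          have := congrArg headOf hshape
          rw [headOf_appLE] at this
          simp at this
      | @ctx a t t' ts₁ ts₂ hred' hlen =>
          have hhd := congrArg headOf hshape
          rw [headOf_appLE] at hhd
          simp at hhd
          subst hhd
          have hsp := congrArg spineArgs hshape
          rw [spineArgs_appLE] at hsp
          simp at hsp
          rcases two_split hsp with ⟨h1, h2, h3⟩ | ⟨h1, h2, h3⟩
          · subst h1; subst h2; subst h3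
            obtain ⟨πl, πr, rfl, u₁, hu₁, u₂, hu₂, s₁, s₂⟩ :=
              ih [t'] D₂ (by simp [appLE])
            simp at hu₁
            subst hu₁
            exact ⟨πl, πr, rfl, t, by simp, u₂, hu₂,
              Relation.ReflTransGen.head hred' s₁, s₂⟩
          · subst h1; subst h2; subst h3
            obtain ⟨πl, πr, rfl, u₁, hu₁, u₂, hu₂, s₁, s₂⟩ :=
              ih D₁ [t'] (by simp [appLE])
            simp at hu₂
            subst hu₂
            exact ⟨πl, πr, rfl, u₁, hu₁, t, by simp,
              s₁, Relation.ReflTransGen.head hred' s₂⟩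
      | @collapse a t U Us₁ Us₂ hmem hne1 hlen =>
          have hhd := congrArg headOf hshape
          rw [headOf_appLE] at hhd
          simp at hhd
          subst hhd
          have hsp := congrArg spineArgs hshape
          rw [spineArgs_appLE] at hsp
          simp at hsp
          rcases two_split hsp with ⟨h1, h2, h3⟩ | ⟨h1, h2, h3⟩
          · subst h1; subst h2; subst h3
            obtain ⟨πl, πr, rfl, u₁, hu₁, u₂, hu₂, s₁, s₂⟩ :=
              ih [t] D₂ (by simp [appLE])
            simp at hu₁
            exact ⟨πl, πr, rfl, u₁, by rw [hu₁]; exact hmem, u₂, hu₂, s₁, s₂⟩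
          · subst h1; subst h2; subst h3
            obtain ⟨πl, πr, rfl, u₁, hu₁, u₂, hu₂, s₁, s₂⟩ :=
              ih D₁ [t] (by simp [appLE])
            simp at hu₂
            exact ⟨πl, πr, rfl, u₁, hu₁, u₂, by rw [hu₂]; exact hmem, s₁, s₂⟩

theorem tree_balEnv {ntyR : NN → Ty2} :
    ∀ (π : BT β) {Φ ρ}, RTy ntyR Φ (BT.toETm π) ρ → BalEnv Φ
  | .e, Φ, ρ, h => by cases h <;> assumption
  | .ltr a, Φ, ρ, h => by cases h <;> assumption
  | .br l r, Φ, ρ, h => by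
      cases h with
      | @app Φ0 Φ1 _ _ ρ1 _ h1 hne h2 hbal =>
          cases h1 with
          | @app Φ00 Φ01 _ _ ρ2 _ h3 hne' h4 hbal' =>
              have hb0 : BalEnv Φ00 := by cases h3 <;> assumption
              have hb1 := tree_balEnv l (h4 _ (by simp))
              have hb2 := tree_balEnv r (h2 _ (by simp))
              intro p hp
              rcases Finset.mem_union.mp hp with hp' | hp'
              · rcases Finset.mem_union.mp hp' with hp'' | hp''
                · exact hb0 p hp''
                · exact hb1 p hp''
              · exact hb2 p hp' 

lemma classify {ntyR : NN → Ty2} {x : Nat} {Φ} {u : ETm Nat NN (TSym β)} {ρ}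
    (h : RTy ntyR Φ u ρ) :
    Φ ⊆ {(x, Ty2.oR)} →
    (u = .var x ∧ ρ = .oR) ∨ (∃ A, headOf u = .nt A) ∨ (∃ y b, headOf u = .lam y b)
    ∨ (∃ a, u = .tm a) ∨ (∃ U, u = .app (.tm .br) U)
    ∨ (∃ U₁ U₂, u = .app (.app (.tm .br) U₁) U₂) := by
  induction h with
  | var hmem hbal =>
      intro hΦ
      have := Finset.mem_singleton.mp (hΦ hmem)
      simp only [Prod.mk.injEq] at this
      exact Or.inl ⟨by rw [this.1], this.2⟩
  | ltr _ => exact fun _ => Or.inr (Or.inr (Or.inr (Or.inl ⟨_, rfl⟩)))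
  | brO _ => exact fun _ => Or.inr (Or.inr (Or.inr (Or.inl ⟨_, rfl⟩)))
  | brR _ => exact fun _ => Or.inr (Or.inr (Or.inr (Or.inl ⟨_, rfl⟩)))
  | epsO _ => exact fun _ => Or.inr (Or.inr (Or.inr (Or.inl ⟨_, rfl⟩)))
  | epsR _ => exact fun _ => Or.inr (Or.inr (Or.inr (Or.inl ⟨_, rfl⟩)))
  | ntR _ => exact fun _ => Or.inr (Or.inl ⟨_, rfl⟩)
  | ntO _ => exact fun _ => Or.inr (Or.inl ⟨_, rfl⟩)
  | abs _ _ _ => exact fun _ => Or.inr (Or.inr (Or.inl ⟨_, _, rfl⟩))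
  | @app Φ₀ Φ₁ u U ρ₁ ρ h1 hne h2 hbal ih1 ih2 =>
      intro hΦ
      have hsub : Φ₀ ⊆ {(x, Ty2.oR)} :=
        fun p hp => hΦ (Finset.mem_union_left _ hp)
      rcases ih1 hsub with ⟨_, hty⟩ | ⟨A, hA⟩ | ⟨y, b, hb⟩ | ⟨a, rfl⟩ | ⟨U', rfl⟩ | ⟨U₁, U₂, rfl⟩
      · simp at hty
      · exact Or.inr (Or.inl ⟨A, by simpa using hA⟩)
      · exact Or.inr (Or.inr (Or.inl ⟨y, b, by simpa using hb⟩))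
      · cases h1 <;> exact Or.inr (Or.inr (Or.inr (Or.inr (Or.inl ⟨_, rfl⟩))))
      · exact Or.inr (Or.inr (Or.inr (Or.inr (Or.inr ⟨_, _, rfl⟩))))
      · exfalso
        cases h1 with
        | app h1' _ _ _ =>
            cases h1' with
            | app h1'' _ _ _ => cases h1''


set_option maxRecDepth 8000 in
theorem treeLem {NN β : Type} (G : EGrammar Nat NN (TSym β) treeAr) (ntyR : NN → Ty2)
    (x : Nat) (t : ETm Nat NN (TSym β)) (Φ : Finset (Nat × Ty2))
    (σ : Nat → Option (List (ETm Nat NN (TSym β))))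
    (hnf : ∀ u', ¬ ERed G t u') (hty : RTy ntyR Φ t .o) (hΦ : Φ ⊆ {(x, Ty2.oR)})
    (hred : ∃ (w : ETm Nat NN (TSym β)) (π : BT β), w ∈ dsub σ t ∧ ERedStar G w π.toETm) :
    ∃ π', t = BT.toETm π' := by
  rcases hred with ⟨w, π, hw, hs⟩
  rcases classify hty hΦ with ⟨_, hc⟩ | ⟨A, hA⟩ | hLam | ⟨a, rfl⟩ | ⟨U', rfl⟩ | ⟨U₁, U₂, rfl⟩
  · simp at hc
  · exact (no_tree_of_headNt hA (rty_spine_ne hty) hnf hw hs).elim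
  · exact (no_tree_of_headLam hLam hw hs).elim
  · cases hty with
    | ltr _ => exact ⟨.ltr _, rfl⟩
    | epsO _ => exact ⟨.e, rfl⟩
  · exfalso
    cases hty with
    | app h1 _ _ _ => cases h1
  · cases hty with
    | @app Φ0 Φ1 _ _ ρ₁ _ h1 hU₂ne h2 hbal =>
      cases h1 with
      | @app Φ00 Φ01 _ _ ρ₂ _ h3 hU₁ne h4 hbal2 =>
        cases h3 with
        | brO hb0 =>
          have hl1 : U₁.length = 1 := by
            by_contra hne1
            obtain ⟨t₁, ht₁⟩ := List.exists_mem_of_ne_nil _ hU₁ne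
            exact hnf _ (ERed.collapse (a := .br) (U := U₁) (Us₁ := []) (Us₂ := [U₂])
              ht₁ hne1 rfl)
          obtain ⟨t₁, rfl⟩ := List.length_eq_one_iff.mp hl1
          have hl2 : U₂.length = 1 := by
            by_contra hne2
            obtain ⟨t₂, ht₂⟩ := List.exists_mem_of_ne_nil _ hU₂ne
            exact hnf _ (ERed.collapse (a := .br) (U := U₂) (Us₁ := [[t₁]]) (Us₂ := [])
              ht₂ hne2 rfl)
          obtain ⟨t₂, rfl⟩ := List.length_eq_one_iff.mp hl2
          have hnf₁ : ∀ u', ¬ ERed G t₁ u' := fun u' hr =>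
            hnf (.app (.app (.tm .br) [u']) [t₂])
              (show ERed G (.app (.app (.tm .br) [t₁]) [t₂]) (.app (.app (.tm .br) [u']) [t₂]) from
                ERed.ctx (a := TSym.br) (Us₁ := []) (Us₂ := [[t₂]]) hr rfl)
          have hnf₂ : ∀ u', ¬ ERed G t₂ u' := fun u' hr =>
            hnf (.app (.app (.tm .br) [t₁]) [u'])
              (show ERed G (.app (.app (.tm .br) [t₁]) [t₂]) (.app (.app (.tm .br) [t₁]) [u']) from
                ERed.ctx (a := TSym.br) (Us₁ := [[t₁]]) (Us₂ := []) hr rfl)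
          rw [dsub_app_eq] at hw
          obtain ⟨v1, hv1, rfl⟩ := List.mem_map.mp hw
          rw [dsub_app_eq] at hv1
          obtain ⟨v0, hv0, rfl⟩ := List.mem_map.mp hv1
          rw [dsub_tm] at hv0
          simp at hv0
          subst hv0
          obtain ⟨πl, πr, rfl, w₁, hw₁, w₂, hw₂, s₁, s₂⟩ := red_br_decomp hs _ _ rfl
          simp at hw₁ hw₂
          have hsub1 : Φ01 ⊆ {(x, Ty2.oR)} := fun p hp =>
            hΦ (Finset.mem_union_left _ (Finset.mem_union_right _ hp))
          have hsub2 : Φ1 ⊆ {(x, Ty2.oR)} := fun p hp =>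
            hΦ (Finset.mem_union_right _ hp)
          obtain ⟨π₁, rfl⟩ := treeLem G ntyR x t₁ Φ01 σ hnf₁ (h4 _ (by simp)) hsub1
            ⟨w₁, πl, hw₁, s₁⟩
          obtain ⟨π₂, rfl⟩ := treeLem G ntyR x t₂ Φ1 σ hnf₂ (h2 _ (by simp)) hsub2
            ⟨w₂, πr, hw₂, s₂⟩
          exact ⟨.br π₁ π₂, rfl⟩
termination_by sizeOf t
decreasing_by
  all_goals simp_wf
  all_goals (subst_vars; simp; omega)

set_option maxRecDepth 8000 in
theorem mainLem {NN β : Type} (G : EGrammar Nat NN (TSym β) treeAr) (ntyR : NN → Ty2)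
    (x : Nat) (v : ETm Nat NN (TSym β)) (Φ : Finset (Nat × Ty2))
    (σ : Nat → Option (List (ETm Nat NN (TSym β))))
    (hnf : ∀ u', ¬ ERed G v u') (hty : RTy ntyR Φ v .oR)
    (hΦ : Φ ⊆ {(x, Ty2.oR)}) (hx : (x, Ty2.oR) ∈ Φ)
    (hred : ∃ (w : ETm Nat NN (TSym β)) (π : BT β), w ∈ dsub σ v ∧ ERedStar G w π.toETm) :
    RightSpine x v := by
  rcases hred with ⟨w, π, hw, hs⟩
  rcases classify hty hΦ with ⟨rfl, _⟩ | ⟨A, hA⟩ | hLam | ⟨a, rfl⟩ | ⟨U', rfl⟩ | ⟨U₁, U₂, rfl⟩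
  · exact RightSpine.base
  · exact (no_tree_of_headNt hA (rty_spine_ne hty) hnf hw hs).elim
  · exact (no_tree_of_headLam hLam hw hs).elim
  · exfalso
    cases hty with
    | epsR hb => exact absurd (hb _ hx) (by intro hB; cases hB)
  · exfalso
    cases hty with
    | app h1 _ _ _ => cases h1
  · cases hty with
    | @app Φ0 Φ1 _ _ ρ₁ _ h1 hU₂ne h2 hbal =>
      cases h1 with
      | @app Φ00 Φ01 _ _ ρ₂ _ h3 hU₁ne h4 hbal2 =>
        cases h3 with
        | brR hb0 =>
          have hl1 : U₁.length = 1 := by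
            by_contra hne1
            obtain ⟨t₁, ht₁⟩ := List.exists_mem_of_ne_nil _ hU₁ne
            exact hnf _ (ERed.collapse (a := .br) (U := U₁) (Us₁ := []) (Us₂ := [U₂])
              ht₁ hne1 rfl)
          obtain ⟨t₁, rfl⟩ := List.length_eq_one_iff.mp hl1
          have hl2 : U₂.length = 1 := by
            by_contra hne2
            obtain ⟨t₂, ht₂⟩ := List.exists_mem_of_ne_nil _ hU₂ne
            exact hnf _ (ERed.collapse (a := .br) (U := U₂) (Us₁ := [[t₁]]) (Us₂ := [])
              ht₂ hne2 rfl)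
          obtain ⟨t₂, rfl⟩ := List.length_eq_one_iff.mp hl2
          have hnf₁ : ∀ u', ¬ ERed G t₁ u' := fun u' hr =>
            hnf (.app (.app (.tm .br) [u']) [t₂])
              (show ERed G (.app (.app (.tm .br) [t₁]) [t₂]) (.app (.app (.tm .br) [u']) [t₂]) from
                ERed.ctx (a := TSym.br) (Us₁ := []) (Us₂ := [[t₂]]) hr rfl)
          have hnf₂ : ∀ u', ¬ ERed G t₂ u' := fun u' hr =>
            hnf (.app (.app (.tm .br) [t₁]) [u'])
              (show ERed G (.app (.app (.tm .br) [t₁]) [t₂]) (.app (.app (.tm .br) [t₁]) [u']) from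
                ERed.ctx (a := TSym.br) (Us₁ := [[t₁]]) (Us₂ := []) hr rfl)
          rw [dsub_app_eq] at hw
          obtain ⟨v1, hv1, rfl⟩ := List.mem_map.mp hw
          rw [dsub_app_eq] at hv1
          obtain ⟨v0, hv0, rfl⟩ := List.mem_map.mp hv1
          rw [dsub_tm] at hv0
          simp at hv0
          subst hv0
          obtain ⟨πl, πr, rfl, w₁, hw₁, w₂, hw₂, s₁, s₂⟩ := red_br_decomp hs _ _ rfl
          simp at hw₁ hw₂
          have hsub1 : Φ01 ⊆ {(x, Ty2.oR)} := fun p hp =>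
            hΦ (Finset.mem_union_left _ (Finset.mem_union_right _ hp))
          have hsub2 : Φ1 ⊆ {(x, Ty2.oR)} := fun p hp =>
            hΦ (Finset.mem_union_right _ hp)
          obtain ⟨π₁, rfl⟩ := treeLem G ntyR x t₁ Φ01 σ hnf₁ (h4 _ (by simp)) hsub1
            ⟨w₁, πl, hw₁, s₁⟩
          have hbal1 : BalEnv Φ01 := tree_balEnv π₁ (h4 _ (by simp))
          have hx1 : (x, Ty2.oR) ∈ Φ1 := by
            rcases Finset.mem_union.mp hx with h | h
            · rcases Finset.mem_union.mp h with h' | h'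
              · exact absurd (hb0 _ h') (by intro hB; cases hB)
              · exact absurd (hbal1 _ h') (by intro hB; cases hB)
            · exact h
          have hrs := mainLem G ntyR x t₂ Φ1 σ hnf₂ (h2 _ (by simp)) hsub2 hx1
            ⟨w₂, πr, hw₂, s₂⟩
          exact RightSpine.cons π₁ hrs
termination_by sizeOf v
decreasing_by
  all_goals simp_wf
  all_goals (subst_vars; simp; omega)

end Stmt7Aux


/-- Rightmost-occurrence lemma: if v is a normal form, x : oR ⊢ v : oR in the
    linear refinement type system, and [U/x]v reduces to some tree π, then
    v = π₁ * (π₂ * ⋯ (π_n * x)⋯) for some n ≥ 0 and trees π₁,…,π_n. -/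
theorem stmt7 {N β : Type} (G : EGrammar Nat N (TSym β) treeAr)
    (ntyR : N → Ty2) (x : Nat) (v : ETm Nat N (TSym β))
    (hnf : ∀ u', ¬ ERed G v u')
    (hty : RTy ntyR {(x, Ty2.oR)} v .oR)
    (hred : ∃ (U : List (ETm Nat N (TSym β))) (w : ETm Nat N (TSym β))
        (π : BT β),
        DSub (fun y => if y = x then some U else none) v w ∧
        ERedStar G w π.toETm) :
    RightSpine x v := by
  rcases hred with ⟨U, w, π, hw, hs⟩
  exact mainLem G ntyR x v {(x, Ty2.oR)} (fun y => if y = x then some U else none)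
    hnf hty (by simp) (Finset.mem_singleton_self _) ⟨w, π, hw, hs⟩
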